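/- For every integer n ≥ 2, D_n = h_4(n); that is, the excess of the number of binary n-sequences with negative score over those with positive score equals the number of binary n-sequences ending in 1 with score −1. -/

import Mathlib

/-- The score of a binary sequence `x` of length `n` (indices `0,…,n-1`, with `true` = heads = 1
and `false` = tails = 0): the number of consecutive pairs `(1,1)` minus the number of
consecutive pairs `(1,0)`. -/
def scoreSeq (n : ℕ) (x : Fin n → Bool) : ℤ :=
  ((Finset.univ.filter fun i : Fin (n - 1) =>
      x ⟨i.val, by have := i.isLt; omega⟩ = true ∧
      x ⟨i.val + 1, by have := i.isLt; omega⟩ = true).card : ℤ) -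
  ((Finset.univ.filter fun i : Fin (n - 1) =>
      x ⟨i.val, by have := i.isLt; omega⟩ = true ∧
      x ⟨i.val + 1, by have := i.isLt; omega⟩ = false).card : ℤ)

/-- `Dn n` : the number of binary `n`-sequences with negative score minus the number
with positive score. -/
def Dn (n : ℕ) : ℤ :=
  ((Finset.univ.filter fun x : Fin n → Bool => scoreSeq n x < 0).card : ℤ) -
  ((Finset.univ.filter fun x : Fin n → Bool => 0 < scoreSeq n x).card : ℤ)

/-- `Hcnt n s` : the number of binary `n`-sequences ending in 1 (heads) with score `s`. -/
def Hcnt (n : ℕ) (s : ℤ) : ℕ :=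
  (Finset.univ.filter fun x : Fin n → Bool =>
    (∀ i : Fin n, (i : ℕ) = n - 1 → x i = true) ∧ scoreSeq n x = s).card

/-- `h4 n` : the number of binary `n`-sequences ending in 1 with score `-1`
(heady close-call wins for Bob). -/
def h4 (n : ℕ) : ℕ := Hcnt n (-1)

/-! ### Auxiliary development -/

/-- number of `(1,1)` adjacent pairs -/
def PPc (k : ℕ) (x : Fin (k+1) → Bool) : ℕ :=
  (Finset.univ.filter fun i : Fin k => x i.castSucc = true ∧ x i.succ = true).card

/-- number of `(1,0)` adjacent pairs -/
def QQc (k : ℕ) (x : Fin (k+1) → Bool) : ℕ :=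
  (Finset.univ.filter fun i : Fin k => x i.castSucc = true ∧ x i.succ = false).card

lemma score_eq (k : ℕ) (x : Fin (k+1) → Bool) :
    scoreSeq (k+1) x = (PPc k x : ℤ) - QQc k x := rfl

/-- sequences ending in heads with given pair counts -/
def AHc (k p q : ℕ) : ℕ :=
  (Finset.univ.filter fun x : Fin (k+1) → Bool =>
    x (Fin.last k) = true ∧ PPc k x = p ∧ QQc k x = q).card

/-- sequences ending in tails with given pair counts -/
def ATc (k p q : ℕ) : ℕ :=
  (Finset.univ.filter fun x : Fin (k+1) → Bool =>
    x (Fin.last k) = false ∧ PPc k x = p ∧ QQc k x = q).card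

/-- sequences ending in heads with given score -/
def SHc (k : ℕ) (s : ℤ) : ℕ :=
  (Finset.univ.filter fun x : Fin (k+1) → Bool =>
    x (Fin.last k) = true ∧ scoreSeq (k+1) x = s).card

def snocEquiv (k : ℕ) : ((Fin (k+1) → Bool) × Bool) ≃ (Fin (k+2) → Bool) where
  toFun yb := Fin.snoc yb.1 yb.2
  invFun x := (fun j => x j.castSucc, x (Fin.last (k+1)))
  left_inv := by
    rintro ⟨y, b⟩
    refine Prod.ext ?_ ?_
    · funext j; simp [Fin.snoc_castSucc]
    · simp [Fin.snoc_last]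
  right_inv := fun x => Fin.snoc_init_self x

lemma card_snoc {k : ℕ} (p : (Fin (k+2) → Bool) → Prop) [DecidablePred p] :
    (Finset.univ.filter p).card
      = ∑ y : Fin (k+1) → Bool,
          ((if p (Fin.snoc y true) then 1 else 0) + (if p (Fin.snoc y false) then 1 else 0)) := by
  rw [Finset.card_filter]
  rw [← Fintype.sum_equiv (snocEquiv k)
      (fun yb => if p ((snocEquiv k) yb) then 1 else 0)
      (fun x => if p x then 1 else 0) (fun yb => rfl)]
  rw [Fintype.sum_prod_type]
  refine Finset.sum_congr rfl fun y _ => ?_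
  rw [Fintype.sum_bool]
  simp only [snocEquiv, Equiv.coe_fn_mk]
  rfl

lemma cardz {α : Type*} [Fintype α] (p : α → Prop) [DecidablePred p] :
    ((Finset.univ.filter p).card : ℤ) = ∑ y, (if p y then (1:ℤ) else 0) := by
  rw [Finset.card_filter]
  push_cast
  rfl

lemma card_snoc_z {k : ℕ} (p : (Fin (k+2) → Bool) → Prop) [DecidablePred p] :
    ((Finset.univ.filter p).card : ℤ)
      = ∑ y : Fin (k+1) → Bool,
          ((if p (Fin.snoc y true) then (1:ℤ) else 0)
            + (if p (Fin.snoc y false) then 1 else 0)) := by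
  rw [card_snoc p]
  push_cast
  rfl

lemma PPc_snoc (k : ℕ) (y : Fin (k+1) → Bool) (b : Bool) :
    PPc (k+1) (Fin.snoc y b)
      = PPc k y + (if y (Fin.last k) = true ∧ b = true then 1 else 0) := by
  unfold PPc
  rw [Finset.card_filter, Finset.card_filter, Fin.sum_univ_castSucc]
  congr 1
  · exact Finset.sum_congr rfl fun i _ => by
      simp only [Fin.succ_castSucc, Fin.snoc_castSucc]
  · simp [Fin.succ_last, Fin.snoc_castSucc, Fin.snoc_last]

lemma QQc_snoc (k : ℕ) (y : Fin (k+1) → Bool) (b : Bool) :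
    QQc (k+1) (Fin.snoc y b)
      = QQc k y + (if y (Fin.last k) = true ∧ b = false then 1 else 0) := by
  unfold QQc
  rw [Finset.card_filter, Finset.card_filter, Fin.sum_univ_castSucc]
  congr 1
  · exact Finset.sum_congr rfl fun i _ => by
      simp only [Fin.succ_castSucc, Fin.snoc_castSucc]
  · simp [Fin.succ_last, Fin.snoc_castSucc, Fin.snoc_last]

lemma score_snoc (k : ℕ) (y : Fin (k+1) → Bool) (b : Bool) :
    scoreSeq (k+2) (Fin.snoc y b)
      = scoreSeq (k+1) y
        + (if y (Fin.last k) = true then (if b = true then (1:ℤ) else -1) else 0) := by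
  rw [score_eq (k+1), score_eq k, PPc_snoc, QQc_snoc]
  rcases hl : y (Fin.last k) <;> rcases b <;> simp [hl] <;> push_cast <;> ring

/-! ### Recursions for the refined counts -/

lemma AHc_rec_succ (k p q : ℕ) : AHc (k+1) (p+1) q = AHc k p q + ATc k (p+1) q := by
  unfold AHc ATc
  rw [card_snoc, Finset.card_filter, Finset.card_filter, ← Finset.sum_add_distrib]
  refine Finset.sum_congr rfl fun y _ => ?_
  simp only [Fin.snoc_last, PPc_snoc, QQc_snoc]
  rcases hy : y (Fin.last k) <;> simp [hy] <;> split_ifs <;> omega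

lemma AHc_rec_zero (k q : ℕ) : AHc (k+1) 0 q = ATc k 0 q := by
  unfold AHc ATc
  rw [card_snoc, Finset.card_filter]
  refine Finset.sum_congr rfl fun y _ => ?_
  simp only [Fin.snoc_last, PPc_snoc, QQc_snoc]
  rcases hy : y (Fin.last k) <;> simp [hy]

lemma ATc_rec_succ (k p q : ℕ) : ATc (k+1) p (q+1) = AHc k p q + ATc k p (q+1) := by
  unfold AHc ATc
  rw [card_snoc, Finset.card_filter, Finset.card_filter, ← Finset.sum_add_distrib]
  refine Finset.sum_congr rfl fun y _ => ?_
  simp only [Fin.snoc_last, PPc_snoc, QQc_snoc]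
  rcases hy : y (Fin.last k) <;> simp [hy] <;> split_ifs <;> omega

lemma ATc_rec_zero (k p : ℕ) : ATc (k+1) p 0 = ATc k p 0 := by
  unfold ATc
  rw [card_snoc, Finset.card_filter]
  refine Finset.sum_congr rfl fun y _ => ?_
  simp only [Fin.snoc_last, PPc_snoc, QQc_snoc]
  rcases hy : y (Fin.last k) <;> simp [hy]

/-! ### Closed forms -/

def Fc (L p q : ℕ) : ℕ :=
  if p + q < L then (p+q).choose q * (L - 1 - (p+q)).choose q else 0

def Gc (L p q : ℕ) : ℕ :=
  if q = 0 then (if p = 0 then 1 else 0)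
  else if p + q ≤ L then (p+q-1).choose (q-1) * (L - (p+q)).choose q else 0

lemma I1 (k p q : ℕ) : Fc (k+2) (p+1) q = Fc (k+1) p q + Gc (k+1) (p+1) q := by
  rcases q with _ | r
  · have hG : Gc (k+1) (p+1) 0 = 0 := by simp [Gc]
    rw [hG, add_zero]
    unfold Fc
    rcases Nat.lt_or_ge (p+1+0) (k+2) with h | h
    · rw [if_pos h, if_pos (by omega)]
      simp
    · rw [if_neg (by omega), if_neg (by omega)]
  · unfold Fc Gc
    rw [if_neg (Nat.succ_ne_zero r)]
    rcases Nat.lt_or_ge (p + (r+1)) (k+1) with h | h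
    · rw [if_pos (by omega), if_pos h, if_pos (by omega)]
      have e2 : k+2-1-(p+1+(r+1)) = k-(p+r)-1 := by omega
      have e3 : k+1-1-(p+(r+1)) = k-(p+r)-1 := by omega
      have e4 : k+1-(p+1+(r+1)) = k-(p+r)-1 := by omega
      have e5 : p+1+(r+1)-1 = p+(r+1) := by omega
      have e6 : r+1-1 = r := by omega
      have e7 : p+1+(r+1) = (p+(r+1))+1 := by omega
      rw [e2, e3, e4, e5, e6, e7, Nat.choose_succ_succ]
      ring
    · rw [if_neg (by omega), if_neg (by omega), if_neg (by omega)]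

lemma I2 (k q : ℕ) : Fc (k+2) 0 q = Gc (k+1) 0 q := by
  rcases q with _ | r
  · unfold Fc Gc
    rw [if_pos (by omega)]
    simp
  · unfold Fc Gc
    rw [if_neg (Nat.succ_ne_zero r)]
    rcases Nat.lt_or_ge (k+1) (0 + (r+1)) with h | h
    · rw [if_neg (by omega), if_neg (by omega)]
    · rw [if_pos (by omega), if_pos h]
      have e2 : k+2-1-(0+(r+1)) = k+1-(0+(r+1)) := by omega
      have l1 : (0+(r+1)).choose (r+1) = 1 := by
        have e1 : (0:ℕ)+(r+1) = r+1 := by omega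
        rw [e1]; exact Nat.choose_self _
      have l2 : (0+(r+1)-1).choose (r+1-1) = 1 := by
        have e1 : (0:ℕ)+(r+1)-1 = r := by omega
        have e3 : r+1-1 = r := by omega
        rw [e1, e3]; exact Nat.choose_self _
      rw [e2, l1, l2]

lemma I3 (k p q : ℕ) : Gc (k+2) p (q+1) = Fc (k+1) p q + Gc (k+1) p (q+1) := by
  unfold Fc Gc
  rw [if_neg (Nat.succ_ne_zero q), if_neg (Nat.succ_ne_zero q)]
  rcases Nat.lt_or_ge (p+q) (k+1) with h | h
  · rw [if_pos (by omega), if_pos (by omega), if_pos (by omega)]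
    have e1 : p+(q+1)-1 = p+q := by omega
    have e2 : q+1-1 = q := by omega
    have e3 : k+2-(p+(q+1)) = (k+1-1-(p+q))+1 := by omega
    have e4 : k+1-(p+(q+1)) = k+1-1-(p+q) := by omega
    rw [e1, e2, e3, e4, Nat.choose_succ_succ]
    ring
  · rcases Nat.lt_or_ge (k+1) (p+q) with h2 | h2
    · rw [if_neg (by omega), if_neg (by omega), if_neg (by omega)]
    · rw [if_pos (by omega), if_neg (by omega), if_neg (by omega)]
      have e : k+2-(p+(q+1)) = 0 := by omega
      rw [e, Nat.choose_eq_zero_of_lt (by omega : 0 < q+1)]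
      simp

lemma I4 (k p : ℕ) : Gc (k+2) p 0 = Gc (k+1) p 0 := by
  simp [Gc]

lemma PPc_zero (x : Fin 1 → Bool) : PPc 0 x = 0 := by simp [PPc]

lemma QQc_zero (x : Fin 1 → Bool) : QQc 0 x = 0 := by simp [QQc]

lemma AHc_zero (p q : ℕ) : AHc 0 p q = if p = 0 ∧ q = 0 then 1 else 0 := by
  unfold AHc
  split_ifs with h
  · obtain ⟨rfl, rfl⟩ := h
    decide
  · rw [Finset.card_eq_zero, Finset.filter_eq_empty_iff]
    intro x _
    rw [PPc_zero, QQc_zero]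
    rintro ⟨-, h1, h2⟩
    exact h ⟨h1.symm, h2.symm⟩

lemma ATc_zero (p q : ℕ) : ATc 0 p q = if p = 0 ∧ q = 0 then 1 else 0 := by
  unfold ATc
  split_ifs with h
  · obtain ⟨rfl, rfl⟩ := h
    decide
  · rw [Finset.card_eq_zero, Finset.filter_eq_empty_iff]
    intro x _
    rw [PPc_zero, QQc_zero]
    rintro ⟨-, h1, h2⟩
    exact h ⟨h1.symm, h2.symm⟩

lemma Fc_one (p q : ℕ) : Fc 1 p q = if p = 0 ∧ q = 0 then 1 else 0 := by
  unfold Fc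
  by_cases h : p = 0 ∧ q = 0
  · obtain ⟨rfl, rfl⟩ := h
    simp
  · rw [if_neg h, if_neg (by omega)]

lemma Gc_one (p q : ℕ) : Gc 1 p q = if p = 0 ∧ q = 0 then 1 else 0 := by
  unfold Gc
  rcases q with _ | r
  · simp
  · rw [if_neg (Nat.succ_ne_zero r),
      if_neg (show ¬(p = 0 ∧ r + 1 = 0) from fun h => (Nat.succ_ne_zero r) h.2)]
    split_ifs with h
    · have hp : p = 0 := by omega
      have hr : r = 0 := by omega
      subst hp; subst hr
      decide
    · rfl

lemma closed (k : ℕ) :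
    (∀ p q, AHc k p q = Fc (k+1) p q) ∧ (∀ p q, ATc k p q = Gc (k+1) p q) := by
  induction k with
  | zero =>
      exact ⟨fun p q => by rw [AHc_zero, Fc_one], fun p q => by rw [ATc_zero, Gc_one]⟩
  | succ k ih =>
      constructor
      · intro p q
        cases p with
        | zero => rw [AHc_rec_zero, ih.2, I2]
        | succ p => rw [AHc_rec_succ, ih.1, ih.2, I1]
      · intro p q
        cases q with
        | zero => rw [ATc_rec_zero, ih.2, I4]
        | succ q => rw [ATc_rec_succ, ih.1, ih.2, I3]

lemma TL (k j : ℕ) : Fc (k+2) j (j+1) = Fc (k+1) j (j+1) + Fc (k+1) (j+1) j := by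
  unfold Fc
  rcases Nat.lt_or_ge (j+(j+1)) (k+1) with h | h
  · rw [if_pos (by omega), if_pos h, if_pos (by omega)]
    have hsym : (j+(j+1)).choose j = (j+(j+1)).choose (j+1) := by
      have h1 : j ≤ j+(j+1) := by omega
      have h2 := Nat.choose_symm h1
      have e : j+(j+1) - j = j+1 := by omega
      rw [e] at h2
      exact h2.symm
    have e1 : (j+1)+j = j+(j+1) := by omega
    have e2 : k+2-1-(j+(j+1)) = (k+1-1-(j+(j+1)))+1 := by omega
    rw [e1, e2, Nat.choose_succ_succ, hsym]
    ring
  · rcases Nat.lt_or_ge (j+(j+1)) (k+2) with h2 | h2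
    · rw [if_pos h2, if_neg (by omega), if_neg (by omega)]
      have e : k+2-1-(j+(j+1)) = 0 := by omega
      rw [e, Nat.choose_eq_zero_of_lt (by omega : 0 < j+1)]
      simp
    · rw [if_neg (by omega), if_neg (by omega), if_neg (by omega)]

lemma Fc_diag_vanish (k : ℕ) : Fc (k+1) k (k+1) = 0 := by
  unfold Fc
  rw [if_neg (by omega)]

/-! ### Partition by `q` -/

lemma QQc_le (k : ℕ) (x : Fin (k+1) → Bool) : QQc k x ≤ k := by
  unfold QQc
  calc (Finset.univ.filter _).card ≤ (Finset.univ : Finset (Fin k)).card :=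
        Finset.card_filter_le _ _
    _ = k := by simp

lemma P1 (k : ℕ) : SHc k (-1) = ∑ j ∈ Finset.range k, AHc k j (j+1) := by
  unfold SHc
  have hmem : ∀ x ∈ (Finset.univ.filter fun x : Fin (k+1) → Bool =>
      x (Fin.last k) = true ∧ scoreSeq (k+1) x = -1), QQc k x ∈ Finset.range (k+1) :=
    fun x _ => Finset.mem_range.mpr (by have := QQc_le k x; omega)
  rw [Finset.card_eq_sum_card_fiberwise hmem]
  simp only [Finset.filter_filter]
  rw [Finset.sum_range_succ']
  have h0 : (Finset.univ.filter fun x : Fin (k+1) → Bool =>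
      (x (Fin.last k) = true ∧ scoreSeq (k+1) x = -1) ∧ QQc k x = 0).card = 0 := by
    rw [Finset.card_eq_zero, Finset.filter_eq_empty_iff]
    intro x _
    rw [score_eq]
    rintro ⟨⟨-, h2⟩, h3⟩
    omega
  rw [h0, add_zero]
  refine Finset.sum_congr rfl ?_
  intro j _
  show (Finset.univ.filter fun x : Fin (k+1) → Bool =>
      (x (Fin.last k) = true ∧ scoreSeq (k+1) x = -1) ∧ QQc k x = j+1).card
    = AHc k j (j+1)
  unfold AHc
  congr 1
  apply Finset.filter_congr
  intro x _
  have hs := score_eq k x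
  constructor
  · rintro ⟨⟨h1, h2⟩, h3⟩
    rw [hs] at h2
    refine ⟨h1, ?_, h3⟩
    clear hmem h0
    omega
  · rintro ⟨h1, h2, h3⟩
    rw [hs]
    refine ⟨⟨h1, ?_⟩, h3⟩
    clear hmem h0
    omega

lemma P2 (k : ℕ) : SHc k 1 = ∑ q ∈ Finset.range (k+1), AHc k (q+1) q := by
  unfold SHc
  have hmem : ∀ x ∈ (Finset.univ.filter fun x : Fin (k+1) → Bool =>
      x (Fin.last k) = true ∧ scoreSeq (k+1) x = 1), QQc k x ∈ Finset.range (k+1) :=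
    fun x _ => Finset.mem_range.mpr (by have := QQc_le k x; omega)
  rw [Finset.card_eq_sum_card_fiberwise hmem]
  simp only [Finset.filter_filter]
  refine Finset.sum_congr rfl ?_
  intro q _
  unfold AHc
  congr 1
  apply Finset.filter_congr
  intro x _
  have hs := score_eq k x
  constructor
  · rintro ⟨⟨h1, h2⟩, h3⟩
    rw [hs] at h2
    refine ⟨h1, ?_, h3⟩
    clear hmem
    omega
  · rintro ⟨h1, h2, h3⟩
    rw [hs]
    refine ⟨⟨h1, ?_⟩, h3⟩
    clear hmem
    omega

lemma key (k : ℕ) : SHc (k+1) (-1) = SHc k (-1) + SHc k 1 := by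
  rw [P1 (k+1), P1 k, P2 k]
  have h1 : ∀ j ∈ Finset.range (k+1),
      AHc (k+1) j (j+1) = Fc (k+1) j (j+1) + Fc (k+1) (j+1) j := by
    intro j _
    rw [(closed (k+1)).1, TL]
  rw [Finset.sum_congr rfl h1, Finset.sum_add_distrib]
  congr 1
  · rw [Finset.sum_range_succ]
    have h2 : ∀ j ∈ Finset.range k, Fc (k+1) j (j+1) = AHc k j (j+1) :=
      fun j _ => ((closed k).1 j (j+1)).symm
    rw [Finset.sum_congr rfl h2, Fc_diag_vanish, add_zero]
  · exact Finset.sum_congr rfl fun j _ => ((closed k).1 (j+1) j).symm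

/-! ### Recursion for `Dn` -/

lemma DREC (k : ℕ) : Dn (k+2) = 2 * Dn (k+1) - SHc k (-1) + SHc k 1 := by
  have hS : ∀ s : ℤ, ((SHc k s : ℤ)) = ∑ y : Fin (k+1) → Bool,
      (if (y (Fin.last k) = true ∧ scoreSeq (k+1) y = s) then (1:ℤ) else 0) := fun s => by
    unfold SHc; rw [cardz]
  rw [Dn, Dn, card_snoc_z, card_snoc_z, cardz, cardz, hS, hS]
  rw [← Finset.sum_sub_distrib, ← Finset.sum_sub_distrib, Finset.mul_sum,
    ← Finset.sum_sub_distrib, ← Finset.sum_add_distrib]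
  refine Finset.sum_congr rfl fun y _ => ?_
  rw [score_snoc, score_snoc]
  rcases hl : y (Fin.last k) <;> simp [hl] <;> split_ifs <;> omega

lemma Hcnt_eq (k : ℕ) (s : ℤ) : Hcnt (k+1) s = SHc k s := by
  unfold Hcnt SHc
  congr 1
  apply Finset.filter_congr
  intro x _
  constructor
  · rintro ⟨h1, h2⟩
    exact ⟨h1 (Fin.last k) (by simp), h2⟩
  · rintro ⟨h1, h2⟩
    refine ⟨fun i hi => ?_, h2⟩
    have : i = Fin.last k := Fin.ext (by simpa using hi)
    rwa [this]

lemma mainlem (k : ℕ) : Dn (k+1) = (SHc k (-1) : ℤ) := by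
  induction k with
  | zero =>
      have hsc : ∀ x : Fin 1 → Bool, scoreSeq 1 x = 0 := fun x => by
        rw [score_eq 0]; simp [PPc, QQc]
      simp [Dn, SHc, hsc]
  | succ k ih =>
      rw [DREC k, ih, key k]
      push_cast
      ring

/-- Theorem 1(i): for every `n ≥ 2`, `D_n = h₄(n)`. -/
theorem D_eq_h4 (n : ℕ) (hn : 2 ≤ n) : Dn n = (h4 n : ℤ) := by
  obtain ⟨k, rfl⟩ : ∃ k, n = k + 1 := ⟨n - 1, by omega⟩
  rw [h4, Hcnt_eq]
  exact mainlem k
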